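/- In the Lambek grammar with lexical types A : s/(s/(s\s)) and B : s (with s atomic and distinguished), for every n ∈ ℕ the sequent Aⁿ B ⊢ s is derivable in the Lambek calculus S_IE; e.g. for n = 2 a derivation has λ-term A(λx. A(λy. x (y B))). -/

import Mathlib

inductive OType (Pr : Type) where
  | atom : Pr → OType Pr
  | over : OType Pr → OType Pr → OType Pr   -- `over β α` is β/α
  | under : OType Pr → OType Pr → OType Pr  -- `under α β` is α\β
deriving DecidableEq

/-- The product-free Lambek calculus S_IE on sequents `Γ ⊢ β` with `Γ` a
nonempty word of types (the lexicon rule replaces each lexical symbol by one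
of its types, so words of lexical symbols are analysed through their type
assignments). -/
inductive Der {Pr : Type} : List (OType Pr) → OType Pr → Prop where
  | ax (α : OType Pr) : Der [α] α
  | introR {Γ : List (OType Pr)} {α β : OType Pr} :
      Γ ≠ [] → Der (Γ ++ [α]) β → Der Γ (.over β α)
  | introL {Γ : List (OType Pr)} {α β : OType Pr} :
      Γ ≠ [] → Der (α :: Γ) β → Der Γ (.under α β)
  | elimR {Γ Δ : List (OType Pr)} {α β : OType Pr} :
      Der Γ (.over β α) → Der Δ α → Der (Γ ++ Δ) β
  | elimL {Γ Δ : List (OType Pr)} {α β : OType Pr} :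
      Der Γ (.under α β) → Der Δ α → Der (Δ ++ Γ) β

/-- Atomic types of the grammar G₂ (only s). -/
inductive At where
  | s
deriving DecidableEq

/-- A : s/(s/(s\s)) -/
def tyA : OType At :=
  .over (.atom .s) (.over (.atom .s) (.under (.atom .s) (.atom .s)))
/-- B : s -/
def tyB : OType At := .atom .s

def tyU : OType At := .under (.atom .s) (.atom .s)

lemma appendU {Δ : List (OType At)} (h : Der Δ (.atom At.s)) :
    Der (Δ ++ [tyU]) (.atom At.s) :=
  Der.elimL (Der.ax tyU) h

lemma key : ∀ n k, Der (List.replicate n tyA ++ [tyB] ++ List.replicate k tyU)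
    (OType.atom At.s) := by
  intro n
  induction n with
  | zero =>
    intro k
    induction k with
    | zero => simpa [tyB] using Der.ax tyB
    | succ k ih =>
      have := appendU ih
      simpa [List.replicate_succ' (n := k), List.append_assoc] using this
  | succ n ih =>
    intro k
    have h1 : Der (List.replicate n tyA ++ [tyB] ++ List.replicate (k+1) tyU)
        (OType.atom At.s) := ih (k+1)
    have hne : List.replicate n tyA ++ [tyB] ++ List.replicate k tyU ≠ [] := by
      simp
    have h2 : Der (List.replicate n tyA ++ [tyB] ++ List.replicate k tyU)
        (.over (.atom At.s) tyU) := by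
      apply Der.introR hne
      simpa [List.replicate_succ' (n := k), List.append_assoc] using h1
    have h3 := Der.elimR (Der.ax tyA) h2
    simpa [tyA, tyU, List.replicate_succ, List.append_assoc] using h3

/-- In the Lambek grammar with lexicon A : s/(s/(s\s)) and B : s, for every
n ∈ ℕ the sequent Aⁿ B ⊢ s is derivable in S_IE. -/
theorem AnB_derivable (n : ℕ) :
    Der (List.replicate n tyA ++ [tyB]) (.atom At.s) := by
  simpa using key n 0
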